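/- arXiv:math/0405536 — 4 statements merged into one kernel-verified Lean document; each statement's English description precedes it below -/
import Mathlib

section
/- A countable group G is left orderable if and only if G embeds into the group of orientation-preserving homeomorphisms of the real line. -/
noncomputable section

/-- Extension of an order-automorphism of `ℚ` to `ℝ` via suprema. -/
def extFun (φ : ℚ ≃o ℚ) (x : ℝ) : ℝ :=
  sSup ((fun q : ℚ => (φ q : ℝ)) '' {q : ℚ | (q : ℝ) < x})

lemma extFun_set_nonempty (φ : ℚ ≃o ℚ) (x : ℝ) :
    ((fun q : ℚ => (φ q : ℝ)) '' {q : ℚ | (q : ℝ) < x}).Nonempty := by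
  obtain ⟨q, hq⟩ := exists_rat_lt x
  exact ⟨_, ⟨q, hq, rfl⟩⟩

lemma extFun_set_bddAbove (φ : ℚ ≃o ℚ) (x : ℝ) :
    BddAbove ((fun q : ℚ => (φ q : ℝ)) '' {q : ℚ | (q : ℝ) < x}) := by
  obtain ⟨s, hs⟩ := exists_rat_gt x
  refine ⟨(φ s : ℝ), ?_⟩
  rintro y ⟨q, hq, rfl⟩
  have : q < s := by exact_mod_cast (show (q:ℝ) < x from hq).trans hs
  show (φ q : ℝ) ≤ (φ s : ℝ)
  exact_mod_cast (φ.lt_iff_lt.2 this).le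

lemma le_of_forall_rat_lt_le {y z : ℝ} (h : ∀ r : ℚ, (r : ℝ) < y → (r : ℝ) ≤ z) : y ≤ z := by
  by_contra hc
  push_neg at hc
  obtain ⟨r, hr1, hr2⟩ := exists_rat_btwn hc
  exact absurd (h r hr2) (not_le.2 hr1)

lemma extFun_strictMono (φ : ℚ ≃o ℚ) : StrictMono (extFun φ) := by
  intro x y hxy
  obtain ⟨q1, hq1, hq1'⟩ := exists_rat_btwn hxy
  obtain ⟨q2, hq2, hq2'⟩ := exists_rat_btwn hq1'
  have h1 : extFun φ x ≤ (φ q1 : ℝ) := by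
    apply csSup_le (extFun_set_nonempty φ x)
    rintro z ⟨q, hq, rfl⟩
    have : q < q1 := by exact_mod_cast (show (q:ℝ) < x from hq).trans hq1
    show (φ q : ℝ) ≤ (φ q1 : ℝ)
    exact_mod_cast (φ.lt_iff_lt.2 this).le
  have h2 : (φ q2 : ℝ) ≤ extFun φ y :=
    le_csSup (extFun_set_bddAbove φ y) ⟨q2, hq2', rfl⟩
  have h3 : (φ q1 : ℝ) < (φ q2 : ℝ) := by
    exact_mod_cast φ.lt_iff_lt.2 (by exact_mod_cast hq2)
  exact h1.trans_lt (h3.trans_le h2)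

lemma extFun_comp (φ ψ : ℚ ≃o ℚ) (x : ℝ) :
    extFun φ (extFun ψ x) = extFun (ψ.trans φ) x := by
  apply le_antisymm
  · apply csSup_le (extFun_set_nonempty φ _)
    rintro z ⟨r, hr, rfl⟩
    -- r < extFun ψ x, so ∃ q < x with r < ψ q
    obtain ⟨w, ⟨q, hq, rfl⟩, hw⟩ :=
      exists_lt_of_lt_csSup (extFun_set_nonempty ψ x) hr
    have hrq : r < ψ q := by exact_mod_cast (show (r:ℝ) < (ψ q : ℝ) from hw)
    have : (φ r : ℝ) ≤ (φ (ψ q) : ℝ) := by exact_mod_cast (φ.lt_iff_lt.2 hrq).le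
    exact this.trans (le_csSup (extFun_set_bddAbove _ x) ⟨q, hq, rfl⟩)
  · apply csSup_le (extFun_set_nonempty _ x)
    rintro z ⟨q, hq, rfl⟩
    obtain ⟨q', hq', hq''⟩ := exists_rat_btwn (show (q:ℝ) < x from hq)
    have hqq' : q < q' := by exact_mod_cast hq'
    have h1 : (ψ q : ℝ) < extFun ψ x := by
      have : (ψ q : ℝ) < (ψ q' : ℝ) := by exact_mod_cast ψ.lt_iff_lt.2 hqq'
      exact this.trans_le (le_csSup (extFun_set_bddAbove ψ x) ⟨q', hq'', rfl⟩)
    exact le_csSup (extFun_set_bddAbove φ _) ⟨ψ q, h1, rfl⟩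

lemma extFun_id (x : ℝ) : extFun (OrderIso.refl ℚ) x = x := by
  apply le_antisymm
  · exact csSup_le (extFun_set_nonempty _ x) (by rintro z ⟨q, hq, rfl⟩; exact hq.le)
  · exact le_of_forall_rat_lt_le fun r hr =>
      le_csSup (extFun_set_bddAbove _ x) ⟨r, hr, rfl⟩

lemma extFun_rat (φ : ℚ ≃o ℚ) (q₀ : ℚ) : extFun φ (q₀ : ℝ) = (φ q₀ : ℝ) := by
  apply le_antisymm
  · apply csSup_le (extFun_set_nonempty φ _)
    rintro z ⟨q, hq, rfl⟩
    have : q < q₀ := by exact_mod_cast (show (q:ℝ) < (q₀:ℝ) from hq)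
    show (φ q : ℝ) ≤ (φ q₀ : ℝ)
    exact_mod_cast (φ.lt_iff_lt.2 this).le
  · apply le_of_forall_rat_lt_le
    intro r hr
    have : φ.symm r < q₀ := by
      have : r < φ q₀ := by exact_mod_cast hr
      simpa using φ.symm.lt_iff_lt.2 this
    have hmem : ((φ (φ.symm r) : ℝ)) ∈ _ :=
      Set.mem_image_of_mem (fun q : ℚ => (φ q : ℝ))
        (show φ.symm r ∈ {q : ℚ | (q:ℝ) < (q₀:ℝ)} by exact_mod_cast this)
    have hle := le_csSup (extFun_set_bddAbove φ (q₀:ℝ)) hmem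
    rw [OrderIso.apply_symm_apply] at hle
    exact hle

/-- The extension as an order isomorphism of `ℝ`. -/
def extIso (φ : ℚ ≃o ℚ) : ℝ ≃o ℝ where
  toFun := extFun φ
  invFun := extFun φ.symm
  left_inv x := by
    rw [extFun_comp]
    simpa using extFun_id x
  right_inv x := by
    rw [extFun_comp]
    simpa using extFun_id x
  map_rel_iff' := by
    intro a b
    exact (extFun_strictMono φ).le_iff_le

/-- Extension as a monoid hom. -/
def extHom : (ℚ ≃o ℚ) →* (ℝ ≃o ℝ) :=
  MonoidHom.mk' extIso (by
    intro φ ψ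
    ext x
    show extFun (φ * ψ) x = extFun φ (extFun ψ x)
    rw [extFun_comp]
    rfl)

lemma extHom_injective : Function.Injective extHom := by
  intro φ ψ h
  ext q
  have := congrArg (fun e : ℝ ≃o ℝ => e (q : ℝ)) h
  simp only [extHom, MonoidHom.mk'_apply] at this
  have h2 : extFun φ (q : ℝ) = extFun ψ (q : ℝ) := this
  rw [extFun_rat, extFun_rat] at h2
  exact_mod_cast h2
end

section Forward

variable {G : Type*} [Group G] [LinearOrder G]

lemma mul_lt_mul_iff_left' (hmul : ∀ a b c : G, b < c → a * b < a * c)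
    (a b c : G) : a * b < a * c ↔ b < c := by
  refine ⟨fun h => ?_, hmul a b c⟩
  have := hmul a⁻¹ _ _ h
  simpa using this

/-- Left translation action on `G ×ₗ ℚ`. -/
def lexAct (hmul : ∀ a b c : G, b < c → a * b < a * c) (g : G) :
    (G ×ₗ ℚ) ≃o (G ×ₗ ℚ) where
  toFun x := toLex (g * (ofLex x).1, (ofLex x).2)
  invFun x := toLex (g⁻¹ * (ofLex x).1, (ofLex x).2)
  left_inv x := by simp
  right_inv x := by simp
  map_rel_iff' := by
    intro x y
    show toLex (g * (ofLex x).1, (ofLex x).2) ≤ toLex (g * (ofLex y).1, (ofLex y).2) ↔ _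
    rw [Prod.Lex.le_iff, show x = toLex (ofLex x) from rfl, show y = toLex (ofLex y) from rfl,
      Prod.Lex.le_iff]
    simp only [ofLex_toLex]
    rw [mul_lt_mul_iff_left' hmul, mul_right_inj]

lemma lexAct_mul (hmul : ∀ a b c : G, b < c → a * b < a * c) (g h : G) :
    lexAct hmul (g * h) = lexAct hmul g * lexAct hmul h := by
  ext x
  show toLex (g * h * (ofLex x).1, (ofLex x).2) = toLex (g * (h * (ofLex x).1), (ofLex x).2)
  rw [mul_assoc]

instance : DenselyOrdered (G ×ₗ ℚ) := by
  constructor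
  intro a b hab
  rcases Prod.Lex.lt_iff.1 hab with h | ⟨h1, h2⟩
  · refine ⟨toLex ((ofLex a).1, (ofLex a).2 + 1), ?_, ?_⟩
    · exact Prod.Lex.lt_iff.2
        (Or.inr ⟨rfl, show (ofLex a).2 < (ofLex a).2 + 1 by linarith⟩)
    · exact Prod.Lex.lt_iff.2 (Or.inl h)
  · obtain ⟨q, hq1, hq2⟩ := exists_between h2
    exact ⟨toLex ((ofLex a).1, q),
      Prod.Lex.lt_iff.2 (Or.inr ⟨rfl, show (ofLex a).2 < q from hq1⟩),
      Prod.Lex.lt_iff.2 (Or.inr ⟨h1, show q < (ofLex b).2 from hq2⟩)⟩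

instance : NoMaxOrder (G ×ₗ ℚ) :=
  ⟨fun a => ⟨toLex ((ofLex a).1, (ofLex a).2 + 1),
    Prod.Lex.lt_iff.2 (Or.inr ⟨rfl, show (ofLex a).2 < (ofLex a).2 + 1 by linarith⟩)⟩⟩

instance : NoMinOrder (G ×ₗ ℚ) :=
  ⟨fun a => ⟨toLex ((ofLex a).1, (ofLex a).2 - 1),
    Prod.Lex.lt_iff.2 (Or.inr ⟨rfl, show (ofLex a).2 - 1 < (ofLex a).2 by linarith⟩)⟩⟩

lemma forward_embed [Countable G] (hmul : ∀ a b c : G, b < c → a * b < a * c) :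
    ∃ f : G →* (ℚ ≃o ℚ), Function.Injective f := by
  haveI : Countable (G ×ₗ ℚ) := (inferInstance : Countable (G × ℚ))
  obtain ⟨ι⟩ := Order.iso_of_countable_dense (G ×ₗ ℚ) ℚ
  refine ⟨MonoidHom.mk' (fun g => (ι.symm.trans (lexAct hmul g)).trans ι) ?_, ?_⟩
  · intro g h
    ext q
    show ι ((lexAct hmul (g*h)) (ι.symm q)) = ι ((lexAct hmul g) (ι.symm (ι ((lexAct hmul h) (ι.symm q)))))
    rw [lexAct_mul, ι.symm_apply_apply]
    rfl
  · rw [injective_iff_map_eq_one]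
    intro g hg
    have := congrArg (fun e : ℚ ≃o ℚ => ι.symm (e (ι (toLex ((1:G), (0:ℚ)))))) hg
    simp only [MonoidHom.mk'_apply, OrderIso.trans_apply, OrderIso.symm_apply_apply] at this
    rw [show (1 : ℚ ≃o ℚ) (ι (toLex ((1:G), (0:ℚ)))) = ι (toLex ((1:G), (0:ℚ))) from rfl,
      ι.symm_apply_apply] at this
    have h2 : (lexAct hmul g) (toLex ((1:G), (0:ℚ))) = toLex ((1:G), (0:ℚ)) := this
    have h3 : toLex (g * 1, (0:ℚ)) = toLex ((1:G), (0:ℚ)) := h2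
    have := congrArg (fun x : G ×ₗ ℚ => (ofLex x).1) h3
    simpa using this

end Forward

section Backward

variable {G : Type*} [Group G]

lemma backward_order (f : G →* (ℝ ≃o ℝ)) (hf : Function.Injective f) :
    ∃ lt : G → G → Prop,
      (∀ a, ¬ lt a a) ∧
      (∀ a b c, lt a b → lt b c → lt a c) ∧
      (∀ a b, a ≠ b → lt a b ∨ lt b a) ∧
      (∀ a b c, lt b c → lt (a * b) (a * c)) := by
  obtain ⟨e, he⟩ := exists_surjective_nat ℚ
  -- if two elements agree at every rational, they are equal
  have key : ∀ g h : G, (∀ n : ℕ, f g (e n) = f h (e n)) → g = h := by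
    intro g h hgh
    apply hf
    have heq : (f g : ℝ → ℝ) = (f h : ℝ → ℝ) := by
      apply Continuous.ext_on (Rat.denseRange_cast (𝕜 := ℝ))
        (f g).continuous (f h).continuous
      rintro x ⟨q, rfl⟩
      obtain ⟨n, rfl⟩ := he q
      exact hgh n
    ext x
    exact congrFun heq x
  refine ⟨fun g h => ∃ n : ℕ, (∀ m < n, f g (e m) = f h (e m)) ∧ f g (e n) < f h (e n),
    ?_, ?_, ?_, ?_⟩
  · rintro a ⟨n, -, hn⟩
    exact lt_irrefl _ hn
  · rintro a b c ⟨n, hn, hn'⟩ ⟨m, hm, hm'⟩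
    rcases lt_trichotomy n m with h | rfl | h
    · exact ⟨n, fun k hk => (hn k hk).trans (hm k (hk.trans h)), hn'.trans_eq (hm n h)⟩
    · exact ⟨n, fun k hk => (hn k hk).trans (hm k hk), hn'.trans hm'⟩
    · exact ⟨m, fun k hk => (hn k (hk.trans h)).trans (hm k hk), (hn m h) ▸ hm'⟩
  · intro a b hab
    have hex : ∃ n : ℕ, f a (e n) ≠ f b (e n) := by
      by_contra hc
      push_neg at hc
      exact hab (key a b hc)
    classical
    let n := Nat.find hex
    have hne : f a (e n) ≠ f b (e n) := Nat.find_spec hex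
    have hbefore : ∀ m < n, f a (e m) = f b (e m) := fun m hm => by
      have := Nat.find_min hex hm
      push_neg at this
      exact this
    rcases hne.lt_or_gt with h | h
    · exact Or.inl ⟨n, hbefore, h⟩
    · exact Or.inr ⟨n, fun m hm => (hbefore m hm).symm, h⟩
  · rintro a b c ⟨n, hn, hn'⟩
    refine ⟨n, fun m hm => ?_, ?_⟩
    · have : f (a * b) (e m) = f a (f b (e m)) := by rw [map_mul]; rfl
      rw [this, hn m hm, show f a (f c (e m)) = f (a * c) (e m) by rw [map_mul]; rfl]
    · have h1 : f (a * b) (e n) = f a (f b (e n)) := by rw [map_mul]; rfl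
      have h2 : f (a * c) (e n) = f a (f c (e n)) := by rw [map_mul]; rfl
      rw [h1, h2]
      exact (f a).lt_iff_lt.2 hn'

end Backward

/-- A countable group `G` is left orderable iff it embeds into the group of
orientation-preserving homeomorphisms of the real line (modeled as order
isomorphisms `ℝ ≃o ℝ`, which are exactly the orientation-preserving
homeomorphisms of `ℝ`). -/
theorem stmt_1 (G : Type*) [Group G] [Countable G] :
    (∃ lt : G → G → Prop,
      (∀ a, ¬ lt a a) ∧
      (∀ a b c, lt a b → lt b c → lt a c) ∧
      (∀ a b, a ≠ b → lt a b ∨ lt b a) ∧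
      (∀ a b c, lt b c → lt (a * b) (a * c))) ↔
    (∃ f : G →* (ℝ ≃o ℝ), Function.Injective f) := by
  constructor
  · rintro ⟨lt, h1, h2, h3, h4⟩
    classical
    haveI : IsIrrefl G lt := ⟨h1⟩
    haveI : IsTrans G lt := ⟨h2⟩
    haveI : IsTrichotomous G lt := ⟨fun a b hab hba => by
      by_contra h
      rcases h3 a b h with h' | h'
      exacts [hab h', hba h']⟩
    haveI : IsStrictTotalOrder G lt := {}
    letI : LinearOrder G := linearOrderOfSTO lt
    have hmul : ∀ a b c : G, b < c → a * b < a * c := h4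
    obtain ⟨f, hf⟩ := forward_embed hmul
    exact ⟨extHom.comp f, extHom_injective.comp hf⟩
  · rintro ⟨f, hf⟩
    exact backward_order f hf
end

section
/- Any two left-invariant total orders on the additive group ℤ[1/r] (for a natural number r > 1) agree up to sign: if ≺₁ and ≺₂ are left-invariant total orders on ℤ[1/r], then either (x ≺₁ y ↔ x ≺₂ y for all x, y) or (x ≺₁ y ↔ y ≺₂ x for all x, y). -/
/-- `ℤ[1/r]`, the subring of `ℚ` generated by `ℤ` and `1/r`. -/
def Zinv (r : ℕ) : Subring ℚ := Subring.closure {((r : ℚ))⁻¹}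

lemma Zinv.rep (r : ℕ) (hr : 1 < r) (a : Zinv r) :
    ∃ (k : ℕ) (p : ℤ), ((r : ℚ)) ^ k * (a : ℚ) = p := by
  have hr0 : (r : ℚ) ≠ 0 := by positivity
  refine Subring.closure_induction ?_ ?_ ?_ ?_ ?_ ?_ a.2
  · rintro x rfl
    exact ⟨1, 1, by field_simp; simp⟩
  · exact ⟨0, 0, by simp⟩
  · exact ⟨0, 1, by simp⟩
  · rintro x y hx hy ⟨k, p, hp⟩ ⟨l, q, hq⟩
    refine ⟨k + l, (r : ℤ) ^ l * p + (r : ℤ) ^ k * q, ?_⟩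
    push_cast
    rw [mul_add, pow_add]
    rw [show (r : ℚ) ^ k * (r : ℚ) ^ l * x = (r : ℚ) ^ l * ((r : ℚ) ^ k * x) by ring, hp,
      show (r : ℚ) ^ k * (r : ℚ) ^ l * y = (r : ℚ) ^ k * ((r : ℚ) ^ l * y) by ring, hq]
  · rintro x hx ⟨k, p, hp⟩
    exact ⟨k, -p, by push_cast; rw [mul_neg, hp]⟩
  · rintro x y hx hy ⟨k, p, hp⟩ ⟨l, q, hq⟩
    refine ⟨k + l, p * q, ?_⟩
    push_cast
    rw [pow_add, show (r : ℚ) ^ k * (r : ℚ) ^ l * (x * y) =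
      ((r : ℚ) ^ k * x) * ((r : ℚ) ^ l * y) by ring, hp, hq]

section
variable {r : ℕ} {lt : Zinv r → Zinv r → Prop}

lemma Zinv.smulPos (h_trans : ∀ a b c, lt a b → lt b c → lt a c)
    (h_inv : ∀ x y z, lt y z → lt (x + y) (x + z)) {a : Zinv r} (ha : lt 0 a) :
    ∀ n : ℕ, lt 0 ((n + 1) • a) := by
  intro n
  induction n with
  | zero => simpa using ha
  | succ n ih =>
      have h2 : lt ((n + 1) • a) ((n + 1) • a + a) := by
        simpa using h_inv ((n + 1) • a) 0 a ha
      rw [succ_nsmul]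
      exact h_trans _ _ _ ih h2

lemma Zinv.smulNeg (h_trans : ∀ a b c, lt a b → lt b c → lt a c)
    (h_inv : ∀ x y z, lt y z → lt (x + y) (x + z)) {a : Zinv r} (ha : lt a 0) :
    ∀ n : ℕ, lt ((n + 1) • a) 0 := by
  intro n
  induction n with
  | zero => simpa using ha
  | succ n ih =>
      have h2 : lt ((n + 1) • a + a) ((n + 1) • a) := by
        simpa using h_inv ((n + 1) • a) a 0 ha
      rw [succ_nsmul]
      exact h_trans _ _ _ h2 ih

/-- the positive cone of a left-invariant order is either the positives or the negatives -/
lemma cone (hr : 1 < r)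
    (h_irrefl : ∀ a, ¬ lt a a)
    (h_trans : ∀ a b c, lt a b → lt b c → lt a c)
    (h_total : ∀ a b, a ≠ b → lt a b ∨ lt b a)
    (h_inv : ∀ x y z, lt y z → lt (x + y) (x + z)) :
    (∀ x : Zinv r, 0 < (x : ℚ) → lt 0 x) ∨ (∀ x : Zinv r, 0 < (x : ℚ) → lt x 0) := by
  by_contra h
  push_neg at h
  obtain ⟨⟨a, ha0, ha⟩, ⟨b, hb0, hb⟩⟩ := h
  have hane : a ≠ 0 := by
    intro h; rw [h] at ha0; simp at ha0
  have hbne : b ≠ 0 := by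
    intro h; rw [h] at hb0; simp at hb0
  have hla : lt a 0 := (h_total a 0 hane).resolve_right ha
  have hlb : lt 0 b := (h_total b 0 hbne).resolve_left hb
  obtain ⟨k, p, hp⟩ := Zinv.rep r hr a
  obtain ⟨l, q, hq⟩ := Zinv.rep r hr b
  have hp0 : 0 < p := by
    have : (0 : ℚ) < (p : ℚ) := by rw [← hp]; positivity
    exact_mod_cast this
  have hq0 : 0 < q := by
    have : (0 : ℚ) < (q : ℚ) := by rw [← hq]; positivity
    exact_mod_cast this
  -- m • a = n • b with m = q.toNat * r^k, n = p.toNat * r^l, both equal p*q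
  set m : ℕ := q.toNat * r ^ k with hm
  set n : ℕ := p.toNat * r ^ l with hn
  have hm1 : 1 ≤ m := by
    have : 0 < q.toNat := by omega
    have hrk : 0 < r ^ k := pow_pos (by omega) k
    exact Nat.one_le_iff_ne_zero.mpr (by positivity)
  have hn1 : 1 ≤ n := by
    have : 0 < p.toNat := by omega
    have hrl : 0 < r ^ l := pow_pos (by omega) l
    exact Nat.one_le_iff_ne_zero.mpr (by positivity)
  have key : m • a = n • b := by
    apply Subtype.ext
    push_cast [nsmul_eq_mul, hm, hn]
    rw [show (q.toNat : ℚ) * (r : ℚ) ^ k * (a : ℚ) = (q.toNat : ℚ) * ((r : ℚ) ^ k * a) by ring, hp,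
      show (p.toNat : ℚ) * (r : ℚ) ^ l * (b : ℚ) = (p.toNat : ℚ) * ((r : ℚ) ^ l * b) by ring, hq]
    have e1 : ((p.toNat : ℚ)) = (p : ℚ) := by exact_mod_cast Int.toNat_of_nonneg hp0.le
    have e2 : ((q.toNat : ℚ)) = (q : ℚ) := by exact_mod_cast Int.toNat_of_nonneg hq0.le
    rw [e1, e2]; ring
  have h1 : lt (m • a) 0 := by
    have := Zinv.smulNeg h_trans h_inv hla (m - 1)
    rwa [Nat.sub_add_cancel hm1] at this
  have h2 : lt 0 (n • b) := by
    have := Zinv.smulPos h_trans h_inv hlb (n - 1)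
    rwa [Nat.sub_add_cancel hn1] at this
  rw [← key] at h2
  exact h_irrefl _ (h_trans _ _ _ h1 h2)

lemma lt_iff_sub (h_inv : ∀ x y z, lt y z → lt (x + y) (x + z)) (x y : Zinv r) :
    lt x y ↔ lt 0 (y - x) := by
  constructor
  · intro h
    have := h_inv (-x) x y h
    simpa [neg_add_cancel, sub_eq_neg_add] using this
  · intro h
    have := h_inv x 0 (y - x) h
    simpa using this

lemma pos_char (h_irrefl : ∀ a, ¬ lt a a)
    (h_trans : ∀ a b c, lt a b → lt b c → lt a c)
    (h_inv : ∀ x y z, lt y z → lt (x + y) (x + z))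
    (hpos : ∀ x : Zinv r, 0 < (x : ℚ) → lt 0 x) (c : Zinv r) :
    lt 0 c ↔ 0 < (c : ℚ) := by
  constructor
  · intro h
    rcases lt_trichotomy (0 : ℚ) (c : ℚ) with h1 | h1 | h1
    · exact h1
    · exfalso
      have : c = 0 := Subtype.ext h1.symm
      rw [this] at h
      exact h_irrefl _ h
    · exfalso
      have hneg : (0 : ℚ) < ((-c : Zinv r) : ℚ) := by push_cast; linarith
      have h2 : lt 0 (-c) := hpos _ hneg
      have h3 : lt c 0 := by
        have := h_inv c 0 (-c) h2
        simpa using this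
      exact h_irrefl _ (h_trans _ _ _ h h3)
  · exact hpos c

lemma neg_char (h_irrefl : ∀ a, ¬ lt a a)
    (h_trans : ∀ a b c, lt a b → lt b c → lt a c)
    (h_inv : ∀ x y z, lt y z → lt (x + y) (x + z))
    (hneg : ∀ x : Zinv r, 0 < (x : ℚ) → lt x 0) (c : Zinv r) :
    lt 0 c ↔ (c : ℚ) < 0 := by
  constructor
  · intro h
    rcases lt_trichotomy ((c : ℚ)) 0 with h1 | h1 | h1
    · exact h1
    · exfalso
      have : c = 0 := Subtype.ext h1
      rw [this] at h
      exact h_irrefl _ h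
    · exfalso
      have h3 : lt c 0 := hneg _ h1
      exact h_irrefl _ (h_trans _ _ _ h h3)
  · intro h1
    have hneg' : (0 : ℚ) < ((-c : Zinv r) : ℚ) := by push_cast; linarith
    have h2 : lt (-c) 0 := hneg _ hneg'
    have := h_inv c (-c) 0 h2
    simpa using this

end

/-- Any two left-invariant (translation-invariant) total orders on the additive
group `ℤ[1/r]` (for `r > 1`) agree up to sign. -/
theorem stmt_2 (r : ℕ) (hr : 1 < r) (lt₁ lt₂ : Zinv r → Zinv r → Prop)
    (h₁_irrefl : ∀ a, ¬ lt₁ a a)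
    (h₁_trans : ∀ a b c, lt₁ a b → lt₁ b c → lt₁ a c)
    (h₁_total : ∀ a b, a ≠ b → lt₁ a b ∨ lt₁ b a)
    (h₁_inv : ∀ x y z, lt₁ y z → lt₁ (x + y) (x + z))
    (h₂_irrefl : ∀ a, ¬ lt₂ a a)
    (h₂_trans : ∀ a b c, lt₂ a b → lt₂ b c → lt₂ a c)
    (h₂_total : ∀ a b, a ≠ b → lt₂ a b ∨ lt₂ b a)
    (h₂_inv : ∀ x y z, lt₂ y z → lt₂ (x + y) (x + z)) :
    (∀ x y, lt₁ x y ↔ lt₂ x y) ∨ (∀ x y, lt₁ x y ↔ lt₂ y x) := by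
  rcases cone hr h₁_irrefl h₁_trans h₁_total h₁_inv with c1 | c1 <;>
  rcases cone hr h₂_irrefl h₂_trans h₂_total h₂_inv with c2 | c2
  · left
    intro x y
    rw [lt_iff_sub h₁_inv, lt_iff_sub h₂_inv,
      pos_char h₁_irrefl h₁_trans h₁_inv c1, pos_char h₂_irrefl h₂_trans h₂_inv c2]
  · right
    intro x y
    rw [lt_iff_sub h₁_inv, lt_iff_sub h₂_inv,
      pos_char h₁_irrefl h₁_trans h₁_inv c1, neg_char h₂_irrefl h₂_trans h₂_inv c2]
    push_cast
    constructor <;> intro <;> linarith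
  · right
    intro x y
    rw [lt_iff_sub h₁_inv, lt_iff_sub h₂_inv,
      neg_char h₁_irrefl h₁_trans h₁_inv c1, pos_char h₂_irrefl h₂_trans h₂_inv c2]
    push_cast
    constructor <;> intro <;> linarith
  · left
    intro x y
    rw [lt_iff_sub h₁_inv, lt_iff_sub h₂_inv,
      neg_char h₁_irrefl h₁_trans h₁_inv c1, neg_char h₂_irrefl h₂_trans h₂_inv c2]
end

section
/- Any left-invariant total order on a subgroup A of the additive group of ℚ is determined up to sign: either the order agrees with the standard order on A, or with its reverse. -/
/-- Any translation-invariant total order on an additive subgroup `A` of `ℚ` is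
determined up to sign: it agrees with the standard order or with its reverse. -/
theorem stmt_3 (A : AddSubgroup ℚ) (lt : A → A → Prop)
    (h_irrefl : ∀ a, ¬ lt a a)
    (h_trans : ∀ a b c, lt a b → lt b c → lt a c)
    (h_total : ∀ a b, a ≠ b → lt a b ∨ lt b a)
    (h_inv : ∀ x y z, lt y z → lt (x + y) (x + z)) :
    (∀ x y : A, lt x y ↔ (x : ℚ) < (y : ℚ)) ∨
    (∀ x y : A, lt x y ↔ (y : ℚ) < (x : ℚ)) := by
  -- reduce lt to comparison with 0
  have h01 : ∀ x y : A, lt x y ↔ lt 0 (y - x) := by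
    intro x y
    constructor
    · intro h
      have := h_inv (-x) x y h
      simpa [neg_add_cancel, neg_add_eq_sub] using this
    · intro h
      have := h_inv x 0 (y - x) h
      have e : x + (y - x) = y := by abel
      simpa [e] using this
  have hneg : ∀ z : A, lt 0 z → lt (-z) 0 := by
    intro z h
    have := h_inv (-z) 0 z h
    simpa using this
  have hneg' : ∀ z : A, lt z 0 → lt 0 (-z) := by
    intro z h
    have := h_inv (-z) z 0 h
    simpa using this
  have hsmul : ∀ (n : ℕ) (z : A), lt 0 z → lt 0 ((n + 1) • z) := by
    intro n z hz
    induction n with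
    | zero => simpa using hz
    | succ k ih =>
      rw [succ_nsmul]
      have h2 := h_inv ((k + 1) • z) 0 z hz
      exact h_trans _ _ _ ih (by simpa using h2)
  have key : ∀ a b : A, 0 < (a : ℚ) → 0 < (b : ℚ) → lt 0 a → lt 0 b := by
    intro a b ha hb hla
    have hanum : (0:ℤ) < (a : ℚ).num := Rat.num_pos.mpr ha
    have hbnum : (0:ℤ) < (b : ℚ).num := Rat.num_pos.mpr hb
    have haden : 0 < (a : ℚ).den := (a : ℚ).pos
    have hbden : 0 < (b : ℚ).den := (b : ℚ).pos
    have hda : ((a : ℚ).den : ℚ) ≠ 0 := Nat.cast_ne_zero.mpr haden.ne'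
    have hdb : ((b : ℚ).den : ℚ) ≠ 0 := Nat.cast_ne_zero.mpr hbden.ne'
    have e1 : ((a : ℚ).den : ℚ) * (a : ℚ) = ((a : ℚ).num : ℚ) := by
      have h := (div_eq_iff hda).mp (Rat.num_div_den (a : ℚ))
      rw [h]; ring
    have e2 : ((b : ℚ).den : ℚ) * (b : ℚ) = ((b : ℚ).num : ℚ) := by
      have h := (div_eq_iff hdb).mp (Rat.num_div_den (b : ℚ))
      rw [h]; ring
    have hmn : ((b : ℚ).num.toNat * (a : ℚ).den) • a
        = ((a : ℚ).num.toNat * (b : ℚ).den) • b := by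
      apply Subtype.ext
      push_cast [nsmul_eq_mul]
      have hca : (((a : ℚ).num.toNat : ℕ) : ℚ) = ((a : ℚ).num : ℚ) := by
        exact_mod_cast congrArg (Int.cast : ℤ → ℚ) (Int.toNat_of_nonneg hanum.le)
      have hcb : (((b : ℚ).num.toNat : ℕ) : ℚ) = ((b : ℚ).num : ℚ) := by
        exact_mod_cast congrArg (Int.cast : ℤ → ℚ) (Int.toNat_of_nonneg hbnum.le)
      rw [hca, hcb]
      calc (((b : ℚ).num : ℚ) * ((a : ℚ).den : ℚ)) * (a : ℚ)
          = ((b : ℚ).num : ℚ) * (((a : ℚ).den : ℚ) * (a : ℚ)) := by ring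
        _ = ((b : ℚ).num : ℚ) * ((a : ℚ).num : ℚ) := by rw [e1]
        _ = ((a : ℚ).num : ℚ) * (((b : ℚ).den : ℚ) * (b : ℚ)) := by rw [e2]; ring
        _ = (((a : ℚ).num : ℚ) * ((b : ℚ).den : ℚ)) * (b : ℚ) := by ring
    have hm1 : (b : ℚ).num.toNat * (a : ℚ).den ≠ 0 := by
      have : (b : ℚ).num.toNat ≠ 0 := by omega
      exact Nat.mul_ne_zero this haden.ne'
    have hn1 : (a : ℚ).num.toNat * (b : ℚ).den ≠ 0 := by
      have : (a : ℚ).num.toNat ≠ 0 := by omega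
      exact Nat.mul_ne_zero this hbden.ne'
    obtain ⟨m', hm'⟩ := Nat.exists_eq_succ_of_ne_zero hm1
    obtain ⟨n', hn'⟩ := Nat.exists_eq_succ_of_ne_zero hn1
    simp only [Nat.succ_eq_add_one] at hm' hn'
    have hpos : lt 0 ((n' + 1) • b) := by
      rw [← hn', ← hmn, hm']
      exact hsmul m' a hla
    by_contra hnb
    have hbne : b ≠ 0 := by
      intro e
      rw [e] at hb
      simp at hb
    rcases h_total 0 b (fun e => hbne e.symm) with h2 | h2
    · exact hnb h2
    · have h3 : lt 0 (-b) := hneg' b h2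
      have h4 : lt 0 ((n' + 1) • (-b)) := hsmul n' (-b) h3
      rw [smul_neg] at h4
      have h5 := hneg _ hpos
      exact h_irrefl 0 (h_trans _ _ _ h4 h5)
  by_cases hex : ∃ a : A, 0 < (a : ℚ) ∧ lt 0 a
  · left
    obtain ⟨a, ha, hla⟩ := hex
    have zlem : ∀ z : A, lt 0 z ↔ 0 < (z : ℚ) := by
      intro z
      constructor
      · intro h
        rcases lt_trichotomy (0:ℚ) (z : ℚ) with h1 | h1 | h1
        · exact h1
        · exfalso
          have : z = 0 := Subtype.ext h1.symm
          rw [this] at h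
          exact h_irrefl 0 h
        · exfalso
          have hz' : 0 < ((-z : A) : ℚ) := by push_cast; linarith
          have h2 := key a (-z) ha hz' hla
          have h3 := hneg _ h2
          rw [neg_neg] at h3
          exact h_irrefl 0 (h_trans _ _ _ h h3)
      · intro h
        exact key a z ha h hla
    intro x y
    rw [h01 x y, zlem (y - x)]
    have hc : ((y - x : A) : ℚ) = (y : ℚ) - (x : ℚ) := by push_cast; ring
    rw [hc]
    exact sub_pos
  · right
    push_neg at hex
    have zlem : ∀ z : A, lt 0 z ↔ (z : ℚ) < 0 := by
      intro z
      constructor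
      · intro h
        rcases lt_trichotomy ((z : ℚ)) 0 with h1 | h1 | h1
        · exact h1
        · exfalso
          have : z = 0 := Subtype.ext h1
          rw [this] at h
          exact h_irrefl 0 h
        · exact absurd h (hex z h1)
      · intro h
        have hz' : 0 < ((-z : A) : ℚ) := by push_cast; linarith
        have h1 : ¬ lt 0 (-z) := hex _ hz'
        have hne : (0 : A) ≠ -z := by
          intro e
          have : ((-z : A) : ℚ) = 0 := by rw [← e]; simp
          linarith
        rcases h_total 0 (-z) hne with h2 | h2
        · exact absurd h2 h1
        · have h3 := hneg' _ h2
          rwa [neg_neg] at h3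
    intro x y
    rw [h01 x y, zlem (y - x)]
    have hc : ((y - x : A) : ℚ) = (y : ℚ) - (x : ℚ) := by push_cast; ring
    rw [hc]
    exact sub_neg
end

section
/- Let B be a group acting on ℝ by orientation-preserving homeomorphisms. If B is nonabelian, then some nontrivial element of B fixes a point of ℝ. -/
section Holder

variable {B : Type*} [Group B] (φ : B →* (ℝ ≃o ℝ))
  (hfree : ∀ g : B, g ≠ 1 → ∀ x : ℝ, φ g x ≠ x)

local notation "v" => fun g : B => φ g 0

lemma mul_app (x y : B) (t : ℝ) : φ (x * y) t = φ x (φ y t) := by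
  rw [map_mul]; rfl

lemma one_app (t : ℝ) : φ (1 : B) t = t := by
  rw [map_one]; rfl

include hfree

/-- If `φ g 0 < 0` then `φ g x < x` everywhere. -/
lemma neg_all {g : B} (hg : φ g 0 < 0) : ∀ x, φ g x < x := by
  have hg1 : g ≠ 1 := by
    rintro rfl
    rw [one_app] at hg; exact lt_irrefl 0 hg
  intro x
  by_contra hx
  push_neg at hx
  have hx' : x < φ g x := lt_of_le_of_ne hx (fun h => hfree g hg1 x h.symm)
  set f : ℝ → ℝ := fun t => φ g t - t with hf
  have hc : Continuous f := ((φ g).toHomeomorph.continuous).sub continuous_id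
  have h0 : (0 : ℝ) ∈ Set.uIcc (f 0) (f x) := by
    apply Set.mem_uIcc.2
    left
    constructor
    · simpa [hf] using hg.le
    · simpa [hf] using hx'.le
  obtain ⟨t, _, ht⟩ := intermediate_value_uIcc hc.continuousOn h0
  exact hfree g hg1 t (by linarith [ht, sub_eq_zero.mp (by linarith [ht] : f t = 0)])

lemma pos_all {g : B} (hg : 0 < φ g 0) : ∀ x, x < φ g x := by
  have h' : φ g⁻¹ 0 < 0 := by
    have := (φ g⁻¹).strictMono hg
    rwa [← mul_app, inv_mul_cancel, one_app] at this
  intro x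
  have := neg_all φ hfree h' (φ g x)
  rwa [← mul_app, inv_mul_cancel, one_app] at this

/-- pointwise comparison from comparison at 0 -/
lemma lt_all {a b : B} (h : φ a 0 < φ b 0) : ∀ x, φ a x < φ b x := by
  have h0 : φ (b⁻¹ * a) 0 < 0 := by
    have := (φ b⁻¹).strictMono h
    rw [← mul_app, ← mul_app, inv_mul_cancel, one_app] at this
    exact this
  intro x
  have h1 := neg_all φ hfree h0 x
  have h2 := (φ b).strictMono h1
  rwa [← mul_app, mul_inv_cancel_left] at h2

lemma v_inj {a b : B} (h : φ a 0 = φ b 0) : a = b := by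
  by_contra hne
  have : b⁻¹ * a ≠ 1 := by
    intro h'; exact hne (by rw [← one_mul a, ← mul_inv_cancel b, mul_assoc, h', mul_one])
  apply hfree _ this 0
  rw [mul_app]
  rw [h, ← mul_app, inv_mul_cancel, one_app]

lemma mul_left_lt {a b : B} (c : B) (h : φ a 0 < φ b 0) : φ (c * a) 0 < φ (c * b) 0 := by
  rw [mul_app, mul_app]; exact (φ c).strictMono h

lemma mul_right_lt {a b : B} (c : B) (h : φ a 0 < φ b 0) : φ (a * c) 0 < φ (b * c) 0 := by
  rw [mul_app, mul_app]; exact lt_all φ hfree h _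

lemma mul_left_le {a b : B} (c : B) (h : φ a 0 ≤ φ b 0) : φ (c * a) 0 ≤ φ (c * b) 0 := by
  rcases h.lt_or_eq with h | h
  · exact (mul_left_lt φ hfree c h).le
  · rw [v_inj φ hfree h]

lemma mul_right_le {a b : B} (c : B) (h : φ a 0 ≤ φ b 0) : φ (a * c) 0 ≤ φ (b * c) 0 := by
  rcases h.lt_or_eq with h | h
  · exact (mul_right_lt φ hfree c h).le
  · rw [v_inj φ hfree h]

/-- iterates of a positive element are unbounded -/
lemma iter_unbounded {f : B} (hf : 0 < φ f 0) (y : ℝ) : ∃ n : ℕ, y < φ (f ^ n) 0 := by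
  by_contra hb
  push_neg at hb
  set u : ℕ → ℝ := fun n => φ (f ^ n) 0 with hu
  have hsucc : ∀ n, u (n + 1) = φ f (u n) := by
    intro n; rw [hu]; simp only [pow_succ']; rw [mul_app]
  have hmono : Monotone u := by
    apply monotone_nat_of_le_succ
    intro n
    rw [hsucc n]
    exact (pos_all φ hfree hf (u n)).le
  have hbdd : BddAbove (Set.range u) := ⟨y, by rintro x ⟨n, rfl⟩; exact hb n⟩
  set L := ⨆ n, u n with hL
  have htend : Filter.Tendsto u Filter.atTop (nhds L) := tendsto_atTop_ciSup hmono hbdd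
  have htend1 : Filter.Tendsto (fun n => u (n + 1)) Filter.atTop (nhds L) :=
    htend.comp (Filter.tendsto_add_atTop_nat 1)
  have htend2 : Filter.Tendsto (fun n => φ f (u n)) Filter.atTop (nhds (φ f L)) :=
    ((φ f).toHomeomorph.continuous.tendsto L).comp htend
  have hfix : φ f L = L := by
    apply tendsto_nhds_unique _ htend1
    simpa only [hsucc] using htend2
  exact absurd hfix (ne_of_gt (pos_all φ hfree hf L))

lemma v_zpow_pos {f : B} (hf : 0 < φ f 0) {j : ℤ} (hj : 0 < j) : 0 < φ (f ^ j) 0 := by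
  obtain ⟨n, rfl⟩ : ∃ n : ℕ, j = (n : ℤ) := ⟨j.toNat, (Int.toNat_of_nonneg hj.le).symm⟩
  rw [zpow_natCast]
  induction n with
  | zero => simp at hj
  | succ k ih =>
    rcases Nat.eq_zero_or_pos k with rfl | hk
    · simpa using hf
    · have h1 : 0 < φ (f ^ k) 0 := ih (by exact_mod_cast hk)
      rw [pow_succ']
      rw [mul_app]
      exact lt_trans h1 (pos_all φ hfree hf _)

lemma v_zpow_strictMono {f : B} (hf : 0 < φ f 0) {m m' : ℤ} (h : m < m') :
    φ (f ^ m) 0 < φ (f ^ m') 0 := by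
  have : 0 < φ (f ^ (m' - m)) 0 := v_zpow_pos φ hfree hf (by omega)
  have h2 := mul_left_lt φ hfree (f ^ m) (by rwa [one_app (φ := φ)] : φ (1:B) 0 < φ (f ^ (m' - m)) 0)
  rwa [mul_one, ← zpow_add, add_sub_cancel] at h2

/-- Archimedean property with integer powers -/
lemma exists_zpow {f : B} (hf : 0 < φ f 0) (g : B) :
    ∃ m : ℤ, φ (f ^ m) 0 ≤ φ g 0 ∧ φ g 0 < φ (f ^ (m + 1)) 0 := by
  set S : Set ℤ := {n : ℤ | φ g 0 < φ (f ^ n) 0} with hS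
  have hne : ∃ n, n ∈ S := by
    obtain ⟨n, hn⟩ := iter_unbounded φ hfree hf (φ g 0)
    exact ⟨(n : ℤ), by rwa [hS, Set.mem_setOf_eq, zpow_natCast]⟩
  have hbdd : ∃ b : ℤ, ∀ z ∈ S, b ≤ z := by
    obtain ⟨k, hk⟩ := iter_unbounded φ hfree hf (φ g⁻¹ 0)
    refine ⟨-(k : ℤ), fun z hz => ?_⟩
    by_contra hlt
    push_neg at hlt
    -- from hk : φ g⁻¹ 0 < φ (f ^ k) 0  derive φ (f ^ (-(k:ℤ))) 0 < φ g 0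
    have h1 : φ (f ^ (-(k : ℤ)) * g⁻¹) 0 < φ (f ^ (-(k : ℤ)) * f ^ (k : ℕ)) 0 :=
      mul_left_lt φ hfree _ hk
    have h2 : φ (f ^ (-(k : ℤ)) * g⁻¹ * g) 0 < φ (f ^ (-(k : ℤ)) * f ^ (k : ℕ) * g) 0 :=
      mul_right_lt φ hfree _ h1
    rw [mul_assoc, inv_mul_cancel, mul_one] at h2
    have h3 : f ^ (-(k : ℤ)) * f ^ (k : ℕ) = 1 := by
      rw [← zpow_natCast f k, ← zpow_add]; simp
    rw [h3, one_mul] at h2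
    have h4 : φ (f ^ z) 0 < φ (f ^ (-(k : ℤ))) 0 := v_zpow_strictMono φ hfree hf hlt
    exact absurd (lt_trans (lt_trans h4 h2) hz) (lt_irrefl _)
  obtain ⟨n₀, hn₀S, hn₀least⟩ := Int.exists_least_of_bdd hbdd hne
  refine ⟨n₀ - 1, ?_, ?_⟩
  · by_contra hlt
    push_neg at hlt
    exact absurd (hn₀least _ hlt) (by omega)
  · rwa [sub_add_cancel]

/-- if there is no least positive element, positive elements have "square roots below" -/
lemma exists_sq_le (hno : ∀ f : B, 0 < φ f 0 → ∃ h : B, 0 < φ h 0 ∧ φ h 0 < φ f 0)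
    {c : B} (hc : 0 < φ c 0) : ∃ ε : B, 0 < φ ε 0 ∧ φ (ε ^ (2 : ℤ)) 0 ≤ φ c 0 := by
  obtain ⟨a, ha, hac⟩ := hno c hc
  by_cases h2 : φ (a ^ (2 : ℤ)) 0 ≤ φ c 0
  · exact ⟨a, ha, h2⟩
  push_neg at h2
  refine ⟨a⁻¹ * c, ?_, ?_⟩
  · have := mul_left_lt φ hfree a⁻¹ hac
    rwa [inv_mul_cancel, one_app (φ := φ)] at this
  · have haa : φ c 0 ≤ φ (a * a) 0 := by
      have : a ^ (2 : ℤ) = a * a := zpow_two a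
      rw [← this]; exact h2.le
    have s1 : φ (c * a⁻¹) 0 ≤ φ (a * a * a⁻¹) 0 := mul_right_le φ hfree _ haa
    rw [mul_inv_cancel_right] at s1
    have s2 : φ (a⁻¹ * (c * a⁻¹)) 0 ≤ φ (a⁻¹ * a) 0 := mul_left_le φ hfree _ s1
    have s3 : φ (a⁻¹ * (c * a⁻¹) * c) 0 ≤ φ (a⁻¹ * a * c) 0 := mul_right_le φ hfree _ s2
    have e1 : (a⁻¹ * c) ^ (2 : ℤ) = a⁻¹ * (c * a⁻¹) * c := by
      rw [zpow_two]; group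
    have e2 : a⁻¹ * a * c = c := by group
    rw [e2] at s3
    rw [e1]
    exact s3

theorem free_comm (a b : B) : a * b = b * a := by
  by_cases hmin : ∃ f : B, 0 < φ f 0 ∧ ∀ h : B, 0 < φ h 0 → φ f 0 ≤ φ h 0
  · -- least positive element: group is cyclic
    obtain ⟨f, hf, hleast⟩ := hmin
    have hpow : ∀ g : B, ∃ m : ℤ, g = f ^ m := by
      intro g
      obtain ⟨m, h1, h2⟩ := exists_zpow φ hfree hf g
      refine ⟨m, ?_⟩
      set e := f ^ (-m) * g with he
      have he0 : φ (1 : B) 0 ≤ φ e 0 := by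
        have := mul_left_le φ hfree (f ^ (-m)) h1
        rwa [← zpow_add, neg_add_cancel, zpow_zero] at this
      have hef : φ e 0 < φ f 0 := by
        have := mul_left_lt φ hfree (f ^ (-m)) h2
        have h3 : f ^ (-m) * f ^ (m + 1) = f := by
          rw [← zpow_add]; norm_num
        rwa [h3] at this
      have he1 : e = 1 := by
        rcases eq_or_lt_of_le he0 with h | h
        · exact (v_inj φ hfree h.symm).symm ▸ rfl
        · rw [one_app (φ := φ)] at h
          exact absurd (hleast e h) (not_le.mpr hef)
      have : g = f ^ m * e := by rw [he]; group
      rw [this, he1, mul_one]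
    obtain ⟨p, rfl⟩ := hpow a
    obtain ⟨q, rfl⟩ := hpow b
    rw [← zpow_add, ← zpow_add, add_comm]
  · -- no least positive element
    push_neg at hmin
    set d := (a * b)⁻¹ * (b * a) with hd
    have habd : (a * b) * d = b * a := by rw [hd]; group
    have est : ∀ ε : B, 0 < φ ε 0 →
        φ d 0 < φ (ε ^ (2 : ℤ)) 0 ∧ φ (ε ^ (-2 : ℤ)) 0 < φ d 0 := by
      intro ε hε
      obtain ⟨m, ham, ham'⟩ := exists_zpow φ hfree hε a
      obtain ⟨n, hbn, hbn'⟩ := exists_zpow φ hfree hε b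
      have lowBA : φ (ε ^ (m + n)) 0 ≤ φ (b * a) 0 := by
        have t1 : φ (ε ^ n * ε ^ m) 0 ≤ φ (b * ε ^ m) 0 := mul_right_le φ hfree _ hbn
        have t2 : φ (b * ε ^ m) 0 ≤ φ (b * a) 0 := mul_left_le φ hfree _ ham
        have : ε ^ n * ε ^ m = ε ^ (m + n) := by rw [← zpow_add, add_comm]
        rw [this] at t1
        exact le_trans t1 t2
      have highBA : φ (b * a) 0 < φ (ε ^ (m + n + 2)) 0 := by
        have t1 : φ (b * a) 0 < φ (ε ^ (n + 1) * a) 0 := mul_right_lt φ hfree _ hbn'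
        have t2 : φ (ε ^ (n + 1) * a) 0 < φ (ε ^ (n + 1) * ε ^ (m + 1)) 0 :=
          mul_left_lt φ hfree _ ham'
        have : ε ^ (n + 1) * ε ^ (m + 1) = ε ^ (m + n + 2) := by
          rw [← zpow_add]; ring_nf
        rw [this] at t2
        exact lt_trans t1 t2
      have lowAB : φ (ε ^ (m + n)) 0 ≤ φ (a * b) 0 := by
        have t1 : φ (ε ^ m * ε ^ n) 0 ≤ φ (a * ε ^ n) 0 := mul_right_le φ hfree _ ham
        have t2 : φ (a * ε ^ n) 0 ≤ φ (a * b) 0 := mul_left_le φ hfree _ hbn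
        have : ε ^ m * ε ^ n = ε ^ (m + n) := by rw [← zpow_add]
        rw [this] at t1
        exact le_trans t1 t2
      have highAB : φ (a * b) 0 < φ (ε ^ (m + n + 2)) 0 := by
        have t1 : φ (a * b) 0 < φ (ε ^ (m + 1) * b) 0 := mul_right_lt φ hfree _ ham'
        have t2 : φ (ε ^ (m + 1) * b) 0 < φ (ε ^ (m + 1) * ε ^ (n + 1)) 0 :=
          mul_left_lt φ hfree _ hbn'
        have : ε ^ (m + 1) * ε ^ (n + 1) = ε ^ (m + n + 2) := by
          rw [← zpow_add]; ring_nf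
        rw [this] at t2
        exact lt_trans t1 t2
      constructor
      · have t1 : φ (ε ^ (m + n) * ε ^ (2 : ℤ)) 0 ≤ φ ((a * b) * ε ^ (2 : ℤ)) 0 :=
          mul_right_le φ hfree _ lowAB
        have e1 : ε ^ (m + n) * ε ^ (2 : ℤ) = ε ^ (m + n + 2) := by rw [← zpow_add]
        rw [e1] at t1
        have t2 : φ ((a * b) * d) 0 < φ ((a * b) * ε ^ (2 : ℤ)) 0 := by
          rw [habd]; exact lt_of_lt_of_le highBA t1
        have t3 := mul_left_lt φ hfree (a * b)⁻¹ t2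
        rwa [inv_mul_cancel_left, inv_mul_cancel_left] at t3
      · have t1 : φ ((a * b) * ε ^ (-2 : ℤ)) 0 < φ (ε ^ (m + n + 2) * ε ^ (-2 : ℤ)) 0 :=
          mul_right_lt φ hfree _ highAB
        have e1 : ε ^ (m + n + 2) * ε ^ (-2 : ℤ) = ε ^ (m + n) := by
          rw [← zpow_add]; ring_nf
        rw [e1] at t1
        have t2 : φ ((a * b) * ε ^ (-2 : ℤ)) 0 < φ ((a * b) * d) 0 := by
          rw [habd]; exact lt_of_lt_of_le t1 lowBA
        have t3 := mul_left_lt φ hfree (a * b)⁻¹ t2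
        rwa [inv_mul_cancel_left, inv_mul_cancel_left] at t3
    have hd0 : φ d 0 = 0 := by
      rcases lt_trichotomy (φ d 0) 0 with h | h | h
      · -- d negative : consider d⁻¹
        have hdi : 0 < φ d⁻¹ 0 := by
          have h' : φ d 0 < φ (1 : B) 0 := by rwa [one_app (φ := φ)]
          have := mul_left_lt φ hfree d⁻¹ h'
          rwa [inv_mul_cancel, mul_one, one_app (φ := φ)] at this
        obtain ⟨ε, hε, hε2⟩ := exists_sq_le φ hfree hmin hdi
        have hlt : φ d⁻¹ 0 < φ (ε ^ (2 : ℤ)) 0 := by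
          have h1 := (est ε hε).2
          have h2 := mul_left_lt φ hfree d⁻¹ h1
          rw [inv_mul_cancel] at h2
          have h3 := mul_right_lt φ hfree (ε ^ (2 : ℤ)) h2
          have e1 : d⁻¹ * ε ^ (-2 : ℤ) * ε ^ (2 : ℤ) = d⁻¹ := by group
          have e2 : (1 : B) * ε ^ (2 : ℤ) = ε ^ (2 : ℤ) := one_mul _
          rwa [e1, e2] at h3
        exact absurd hε2 (not_le.mpr hlt)
      · exact h
      · obtain ⟨ε, hε, hε2⟩ := exists_sq_le φ hfree hmin h
        exact absurd hε2 (not_le.mpr (est ε hε).1)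
    have : d = 1 := by
      apply v_inj φ hfree
      rw [hd0, one_app (φ := φ)]
    have := habd
    rw [‹d = 1›, mul_one] at this
    exact this

end Holder

/-- If a nonabelian group acts on `ℝ` by orientation-preserving homeomorphisms
(modeled as order isomorphisms `ℝ ≃o ℝ`), then some nontrivial element fixes a
point of `ℝ`. -/
theorem stmt_6 (B : Type*) [Group B] (φ : B →* (ℝ ≃o ℝ))
    (h_nonabelian : ∃ g h : B, g * h ≠ h * g) :
    ∃ g : B, g ≠ 1 ∧ ∃ x : ℝ, φ g x = x := by
  by_contra hcon
  push_neg at hcon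
  have hfree : ∀ g : B, g ≠ 1 → ∀ x : ℝ, φ g x ≠ x := fun g hg x => hcon g hg x
  obtain ⟨g, h, hgh⟩ := h_nonabelian
  exact hgh (free_comm φ hfree g h)
end
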